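/- Let (H, ◁◁, K) be a right Hopf module of cocommutative Hopf algebras and let δ be the space of ε-co-cocycles α : H → K, i.e. Δ_K ∘ α = (η_K ε_H ⊗ α + α ⊗ η_K ε_H) ∘ Δ_H. For α, β ∈ δ define (α ◁◁* β)(f) := −α(f₍₁₎ ◁◁ β(f₍₂₎)). Then α ◁◁* β ∈ δ, and (δ, ◁◁*, [−,−]_*) is a postLie algebra, where [α,β]_* = α*β − β*α is the convolution commutator bracket. In particular (α ◁◁* β) ◁◁* γ − α ◁◁* (β ◁◁* γ) − (α ◁◁* γ) ◁◁* β + α ◁◁* (γ ◁◁* β) = α ◁◁* [β,γ]_*. -/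

import Mathlib

set_option maxHeartbeats 1000000
set_option synthInstance.maxHeartbeats 400000


open TensorProduct Coalgebra

/-- The convolution product of linear maps `H → K`. -/
noncomputable def convMul {R H K : Type*} [CommRing R] [Ring H] [Ring K]
    [HopfAlgebra R H] [HopfAlgebra R K] (A B : H →ₗ[R] K) : H →ₗ[R] K :=
  (LinearMap.mul' R K) ∘ₗ (TensorProduct.map A B) ∘ₗ Coalgebra.comul

/-- `(α ◁◁* β)(f) := −α(f₍₁₎ ◁◁ β(f₍₂₎))`. -/
noncomputable def triMul {R H K : Type*} [CommRing R] [Ring H] [Ring K]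
    [HopfAlgebra R H] [HopfAlgebra R K]
    (act : H →ₗ[R] K →ₗ[R] H) (A B : H →ₗ[R] K) : H →ₗ[R] K :=
  -(A ∘ₗ (TensorProduct.lift act) ∘ₗ (TensorProduct.map LinearMap.id B) ∘ₗ Coalgebra.comul)

/-- `α` is an `ε`-co-cocycle:
`Δ_K ∘ α = (η_K ε_H ⊗ α + α ⊗ η_K ε_H) ∘ Δ_H`. -/
def IsEpsCocycle {R H K : Type*} [CommRing R] [Ring H] [Ring K]
    [HopfAlgebra R H] [HopfAlgebra R K] (A : H →ₗ[R] K) : Prop :=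
  Coalgebra.comul ∘ₗ A =
    (TensorProduct.map ((Algebra.linearMap R K) ∘ₗ Coalgebra.counit) A
      + TensorProduct.map A ((Algebra.linearMap R K) ∘ₗ Coalgebra.counit))
      ∘ₗ Coalgebra.comul

section aux
variable {R H K : Type*} [CommRing R] [Ring H] [Ring K]
    [HopfAlgebra R H] [HopfAlgebra R K]

lemma repr_counit_smul_right {f : H} {ι : Type*} (rf : Coalgebra.Repr R f ι) :
    ∑ i ∈ rf.index, (counit (R := R) (rf.left i)) • rf.right i = f := by
  have h := Coalgebra.sum_counit_tmul_eq rf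
  have h2 := congrArg (TensorProduct.lid R H) h
  simp only [map_sum, lid_tmul, one_smul] at h2
  exact h2

lemma repr_counit_smul_left {f : H} {ι : Type*} (rf : Coalgebra.Repr R f ι) :
    ∑ i ∈ rf.index, (counit (R := R) (rf.right i)) • rf.left i = f := by
  have h := Coalgebra.sum_tmul_counit_eq rf
  have h2 := congrArg (TensorProduct.rid R H) h
  simp only [map_sum, rid_tmul, one_smul] at h2
  exact h2

end aux

section act
variable {R H K : Type*} [CommRing R] [Ring H] [Ring K]
    [HopfAlgebra R H] [HopfAlgebra R K]
variable (act : H →ₗ[R] K →ₗ[R] H)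

/-- comul of the action, expanded along chosen representations. -/
lemma comul_act_repr
    (hact_comul : ∀ (h : H) (k : K),
      Coalgebra.comul (act h k)
        = (TensorProduct.map (TensorProduct.lift act) (TensorProduct.lift act))
            ((TensorProduct.tensorTensorTensorComm R H H K K)
              (Coalgebra.comul h ⊗ₜ[R] Coalgebra.comul k)))
    (h : H) (k : K) {ι κ : Type*} (rh : Coalgebra.Repr R h ι) (rk : Coalgebra.Repr R k κ) :
    Coalgebra.comul (R := R) (act h k)
      = ∑ i ∈ rh.index, ∑ j ∈ rk.index,
          act (rh.left i) (rk.left j) ⊗ₜ[R] act (rh.right i) (rk.right j) := by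
  rw [hact_comul, ← rh.eq, ← rk.eq]
  simp [sum_tmul, tmul_sum, map_sum, tensorTensorTensorComm_tmul]
  rw [Finset.sum_comm]

/-- `ε(h ◁ k) = ε(h) ε(k)` -/
lemma counit_act
    (hone_act : ∀ k : K, act 1 k = Coalgebra.counit (R := R) k • (1 : H))
    (hact_mul : ∀ (h₁ h₂ : H) (k : K),
      act (h₁ * h₂) k
        = (LinearMap.mul' R H) ((TensorProduct.map (act h₁) (act h₂)) (Coalgebra.comul k)))
    (hact_comul : ∀ (h : H) (k : K),
      Coalgebra.comul (act h k)
        = (TensorProduct.map (TensorProduct.lift act) (TensorProduct.lift act))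
            ((TensorProduct.tensorTensorTensorComm R H H K K)
              (Coalgebra.comul h ⊗ₜ[R] Coalgebra.comul k)))
    (hact_antipode : ∀ (h : H) (k : K),
      HopfAlgebra.antipode (R := R) (act h k) = act (HopfAlgebra.antipode (R := R) h) k)
    (h : H) (k : K) :
    Coalgebra.counit (R := R) (act h k)
      = Coalgebra.counit (R := R) h * Coalgebra.counit (R := R) k := by
  classical
  set rh := Coalgebra.Repr.arbitrary R h
  set rk := Coalgebra.Repr.arbitrary R k
  have main := HopfAlgebra.mul_antipode_lTensor_comul_apply (R := R) (a := act h k)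
  rw [comul_act_repr act hact_comul h k rh rk] at main
  simp only [map_sum, LinearMap.lTensor_tmul, LinearMap.mul'_apply] at main
  -- rewrite antipode of action
  have step1 : ∀ i ∈ rh.index, ∑ j ∈ rk.index,
      act (rh.left i) (rk.left j) * HopfAlgebra.antipode (R := R) (act (rh.right i) (rk.right j))
      = act (rh.left i * HopfAlgebra.antipode (R := R) (rh.right i)) k := by
    intro i _
    rw [hact_mul, ← rk.eq]
    simp [map_sum, hact_antipode]
  rw [Finset.sum_congr rfl step1] at main
  have step2 : ∑ i ∈ rh.index, act (rh.left i * HopfAlgebra.antipode (R := R) (rh.right i)) k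
      = Coalgebra.counit (R := R) h • (Coalgebra.counit (R := R) k • (1 : H)) := by
    have : (∑ i ∈ rh.index, rh.left i * HopfAlgebra.antipode (R := R) (rh.right i))
        = algebraMap R H (Coalgebra.counit (R := R) h) :=
      HopfAlgebra.sum_mul_antipode_eq_algebraMap_counit (R := R) rh
    calc ∑ i ∈ rh.index, act (rh.left i * HopfAlgebra.antipode (R := R) (rh.right i)) k
        = act (∑ i ∈ rh.index, rh.left i * HopfAlgebra.antipode (R := R) (rh.right i)) k := by
          rw [map_sum, LinearMap.coe_sum, Finset.sum_apply]
      _ = act (algebraMap R H (Coalgebra.counit (R := R) h)) k := by rw [this]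
      _ = Coalgebra.counit (R := R) h • act 1 k := by
          rw [Algebra.algebraMap_eq_smul_one, map_smul, LinearMap.smul_apply]
      _ = Coalgebra.counit (R := R) h • (Coalgebra.counit (R := R) k • (1 : H)) := by
          rw [hone_act]
  rw [step2] at main
  have := congrArg (Coalgebra.counit (R := R)) main
  simpa [smul_smul] using this.symm

end act


section coc
variable {R H K : Type*} [CommRing R] [Ring H] [Ring K]
    [HopfAlgebra R H] [HopfAlgebra R K]

lemma cocycle_comul_apply {A : H →ₗ[R] K} (hA : IsEpsCocycle A) (f : H) :
    Coalgebra.comul (R := R) (A f)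
      = (TensorProduct.map ((Algebra.linearMap R K) ∘ₗ Coalgebra.counit) A)
          (Coalgebra.comul f)
        + (TensorProduct.map A ((Algebra.linearMap R K) ∘ₗ Coalgebra.counit))
          (Coalgebra.comul f) := by
  have := LinearMap.congr_fun hA f
  simpa using this

lemma counit_cocycle {A : H →ₗ[R] K} (hA : IsEpsCocycle A) (f : H) :
    Coalgebra.counit (R := R) (A f) = 0 := by
  classical
  set rf := Coalgebra.Repr.arbitrary R f
  have h1 := Coalgebra.rTensor_counit_comul (R := R) (A f)
  rw [cocycle_comul_apply hA f, ← rf.eq] at h1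
  simp only [map_sum, LinearMap.add_apply, TensorProduct.map_tmul, LinearMap.rTensor_tmul,
    LinearMap.coe_comp, Function.comp_apply, Algebra.linearMap_apply, Bialgebra.counit_algebraMap,
    map_add, Finset.sum_add_distrib] at h1
  have h2 : ∑ i ∈ rf.index,
      (Coalgebra.counit (R := R) (rf.left i)) ⊗ₜ[R] (A (rf.right i)) = 1 ⊗ₜ[R] A f := by
    exact Coalgebra.sum_counit_tmul_map_eq (R := R) A f (repr := rf)
  rw [h2] at h1
  have h3 : (∑ i ∈ rf.index, (Coalgebra.counit (R := R) (A (rf.left i))) ⊗ₜ[R]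
      (algebraMap R K (Coalgebra.counit (R := R) (rf.right i)))) = 0 := by
    have h1' := h1
    rw [add_eq_left] at h1'
    exact h1'
  have h4 := congrArg ((TensorProduct.lid R R).toLinearMap ∘ₗ LinearMap.lTensor R (Coalgebra.counit (R := R) (A := K))) h3
  simp only [map_sum, LinearMap.coe_comp, Function.comp_apply, LinearMap.lTensor_tmul,
    Bialgebra.counit_algebraMap, LinearEquiv.coe_coe, TensorProduct.lid_tmul, map_zero,
    smul_eq_mul] at h4
  have h5 : ∑ i ∈ rf.index,
      Coalgebra.counit (R := R) (A (rf.left i)) * Coalgebra.counit (R := R) (rf.right i)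
      = Coalgebra.counit (R := R) (A f) := by
    conv_rhs => rw [← repr_counit_smul_left rf]
    rw [map_sum, map_sum]
    exact Finset.sum_congr rfl fun i _ => by simp [mul_comm]
  rw [h5] at h4
  exact h4

end coc
/-- The map `f ↦ f₍₁₎ ◁ B(f₍₂₎)`. -/
noncomputable def Phi {R H K : Type*} [CommRing R] [Ring H] [Ring K]
    [HopfAlgebra R H] [HopfAlgebra R K] (act : H →ₗ[R] K →ₗ[R] H) (B : H →ₗ[R] K) :
    H →ₗ[R] H :=
  (TensorProduct.lift act) ∘ₗ (TensorProduct.map LinearMap.id B) ∘ₗ Coalgebra.comul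

section phi
variable {R H K : Type*} [CommRing R] [Ring H] [Ring K]
    [HopfAlgebra R H] [HopfAlgebra R K] (act : H →ₗ[R] K →ₗ[R] H)

lemma triMul_eq (A B : H →ₗ[R] K) : triMul act A B = -(A ∘ₗ Phi act B) := rfl

lemma Phi_apply_repr (B : H →ₗ[R] K) (f : H) {ι : Type*} (rf : Coalgebra.Repr R f ι) :
    Phi act B f = ∑ i ∈ rf.index, act (rf.left i) (B (rf.right i)) := by
  rw [Phi]
  simp only [LinearMap.comp_apply]
  rw [← rf.eq]
  simp [map_sum]

lemma Phi_neg (B : H →ₗ[R] K) : Phi act (-B) = -(Phi act B) := by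
  ext f
  classical
  rw [Phi_apply_repr act (-B) f (Coalgebra.Repr.arbitrary R f),
    LinearMap.neg_apply, Phi_apply_repr act B f (Coalgebra.Repr.arbitrary R f)]
  simp [Finset.sum_neg_distrib]

lemma Phi_add (B B' : H →ₗ[R] K) : Phi act (B + B') = Phi act B + Phi act B' := by
  ext f
  classical
  rw [LinearMap.add_apply, Phi_apply_repr act (B + B') f (Coalgebra.Repr.arbitrary R f),
    Phi_apply_repr act B f (Coalgebra.Repr.arbitrary R f),
    Phi_apply_repr act B' f (Coalgebra.Repr.arbitrary R f), ← Finset.sum_add_distrib]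
  simp

lemma Phi_sub (B B' : H →ₗ[R] K) : Phi act (B - B') = Phi act B - Phi act B' := by
  rw [sub_eq_add_neg, Phi_add, Phi_neg, sub_eq_add_neg]

end phi

section coleib
variable {R H K : Type*} [CommRing R] [Ring H] [Ring K]
    [HopfAlgebra R H] [HopfAlgebra R K] (act : H →ₗ[R] K →ₗ[R] H)

lemma act_eta (hact_one : ∀ h : H, act h 1 = h) (x : H) (r : R) :
    act x (algebraMap R K r) = r • x := by
  rw [Algebra.algebraMap_eq_smul_one, map_smul, hact_one]

lemma coLeibniz
    (hcoH : ∀ x : H, (TensorProduct.comm R H H) (Coalgebra.comul x) = Coalgebra.comul x)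
    (hact_one : ∀ h : H, act h 1 = h)
    (hact_comul : ∀ (h : H) (k : K),
      Coalgebra.comul (act h k)
        = (TensorProduct.map (TensorProduct.lift act) (TensorProduct.lift act))
            ((TensorProduct.tensorTensorTensorComm R H H K K)
              (Coalgebra.comul h ⊗ₜ[R] Coalgebra.comul k)))
    {B : H →ₗ[R] K} (hB : IsEpsCocycle B) (f : H) :
    Coalgebra.comul (R := R) (Phi act B f)
      = (TensorProduct.map LinearMap.id (Phi act B)) (Coalgebra.comul f)
        + (TensorProduct.map (Phi act B) LinearMap.id) (Coalgebra.comul f) := by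
  classical
  set rf := Coalgebra.Repr.arbitrary R f with hrfdef
  set s : ∀ i : H × H, Coalgebra.Repr R (rf.left i) (H × H) :=
    fun i => Coalgebra.Repr.arbitrary R (rf.left i) with hsdef
  set r2 : ∀ i : H × H, Coalgebra.Repr R (rf.right i) (H × H) :=
    fun i => Coalgebra.Repr.arbitrary R (rf.right i) with hr2def
  -- expansion of comul of each summand
  have inner : ∀ i,
      Coalgebra.comul (R := R) (act (rf.left i) (B (rf.right i)))
        = (∑ l ∈ (s i).index, (s i).left l ⊗ₜ[R] act ((s i).right l) (B (rf.right i)))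
          + (∑ l ∈ (s i).index, act ((s i).left l) (B (rf.right i)) ⊗ₜ[R] (s i).right l) := by
    intro i
    have hc : Coalgebra.comul (R := R) (B (rf.right i))
        = (∑ j ∈ (r2 i).index,
            algebraMap R K (Coalgebra.counit (R := R) ((r2 i).left j)) ⊗ₜ[R] B ((r2 i).right j))
          + (∑ j ∈ (r2 i).index,
            B ((r2 i).left j) ⊗ₜ[R] algebraMap R K (Coalgebra.counit (R := R) ((r2 i).right j))) := by
      rw [cocycle_comul_apply hB, ← (r2 i).eq]
      simp [map_sum]
    rw [hact_comul, ← (s i).eq, hc]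
    simp only [tmul_add, map_add, sum_tmul, tmul_sum, map_sum, tensorTensorTensorComm_tmul,
      TensorProduct.map_tmul, lift.tmul]
    congr 1
    · rw [Finset.sum_comm]
      refine Finset.sum_congr rfl fun l _ => ?_
      conv_rhs => rw [← repr_counit_smul_right (r2 i)]
      rw [map_sum, map_sum, tmul_sum]
      refine Finset.sum_congr rfl fun j _ => ?_
      rw [act_eta act hact_one]
      simp [map_smul, smul_tmul]
    · rw [Finset.sum_comm]
      refine Finset.sum_congr rfl fun l _ => ?_
      conv_rhs => rw [← repr_counit_smul_left (r2 i)]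
      rw [map_sum, map_sum, sum_tmul]
      refine Finset.sum_congr rfl fun j _ => ?_
      rw [act_eta act hact_one]
      simp [map_smul, tmul_smul, smul_tmul']
  have expand : Coalgebra.comul (R := R) (Phi act B f)
      = (∑ i ∈ rf.index, ∑ l ∈ (s i).index,
          (s i).left l ⊗ₜ[R] act ((s i).right l) (B (rf.right i)))
        + (∑ i ∈ rf.index, ∑ l ∈ (s i).index,
          act ((s i).left l) (B (rf.right i)) ⊗ₜ[R] (s i).right l) := by
    rw [Phi_apply_repr act B f rf, map_sum, Finset.sum_congr rfl (fun i _ => inner i),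
      Finset.sum_add_distrib]
  have hX : (∑ i ∈ rf.index, ∑ l ∈ (s i).index,
        (s i).left l ⊗ₜ[R] ((s i).right l ⊗ₜ[R] rf.right i))
      = ∑ i ∈ rf.index, rf.left i ⊗ₜ[R] Coalgebra.comul (R := R) (rf.right i) := by
    rw [Coalgebra.sum_tmul_tmul_eq rf s r2]
    refine Finset.sum_congr rfl fun i _ => ?_
    rw [← tmul_sum, (r2 i).eq]
  have hT1 : (∑ i ∈ rf.index, ∑ l ∈ (s i).index,
        (s i).left l ⊗ₜ[R] act ((s i).right l) (B (rf.right i)))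
      = (TensorProduct.map LinearMap.id (Phi act B)) (Coalgebra.comul f) := by
    have e1 : (∑ i ∈ rf.index, ∑ l ∈ (s i).index,
          (s i).left l ⊗ₜ[R] act ((s i).right l) (B (rf.right i)))
        = (LinearMap.lTensor H ((TensorProduct.lift act) ∘ₗ (TensorProduct.map LinearMap.id B)))
            (∑ i ∈ rf.index, ∑ l ∈ (s i).index,
              (s i).left l ⊗ₜ[R] ((s i).right l ⊗ₜ[R] rf.right i)) := by
      rw [map_sum]
      refine Finset.sum_congr rfl fun i _ => ?_
      rw [map_sum]
      refine Finset.sum_congr rfl fun l _ => ?_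
      simp [LinearMap.lTensor_tmul]
    rw [e1, hX, map_sum, ← rf.eq, map_sum]
    refine Finset.sum_congr rfl fun i _ => ?_
    rw [LinearMap.lTensor_tmul, TensorProduct.map_tmul]
    simp [Phi]
  have hT2 : (∑ i ∈ rf.index, ∑ l ∈ (s i).index,
        act ((s i).left l) (B (rf.right i)) ⊗ₜ[R] (s i).right l)
      = (TensorProduct.map (Phi act B) LinearMap.id) (Coalgebra.comul f) := by
    have e2 : (∑ i ∈ rf.index, ∑ l ∈ (s i).index,
          act ((s i).left l) (B (rf.right i)) ⊗ₜ[R] (s i).right l)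
        = ((LinearMap.rTensor H ((TensorProduct.lift act) ∘ₗ (TensorProduct.map LinearMap.id B)))
            ∘ₗ (TensorProduct.assoc R H H H).symm.toLinearMap
            ∘ₗ (LinearMap.lTensor H (TensorProduct.comm R H H).toLinearMap))
            (∑ i ∈ rf.index, ∑ l ∈ (s i).index,
              (s i).left l ⊗ₜ[R] ((s i).right l ⊗ₜ[R] rf.right i)) := by
      rw [map_sum]
      refine Finset.sum_congr rfl fun i _ => ?_
      rw [map_sum]
      refine Finset.sum_congr rfl fun l _ => ?_
      simp [LinearMap.lTensor_tmul, LinearMap.rTensor_tmul]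
    have hcommX : (LinearMap.lTensor H (TensorProduct.comm R H H).toLinearMap)
          (∑ i ∈ rf.index, ∑ l ∈ (s i).index,
            (s i).left l ⊗ₜ[R] ((s i).right l ⊗ₜ[R] rf.right i))
        = (∑ i ∈ rf.index, ∑ l ∈ (s i).index,
            (s i).left l ⊗ₜ[R] ((s i).right l ⊗ₜ[R] rf.right i)) := by
      rw [hX, map_sum]
      refine Finset.sum_congr rfl fun i _ => ?_
      rw [LinearMap.lTensor_tmul]
      simp only [LinearEquiv.coe_coe]
      rw [hcoH]
    rw [e2, LinearMap.comp_apply, LinearMap.comp_apply, hcommX]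
    simp only [map_sum]
    conv_rhs => rw [← rf.eq]
    rw [map_sum]
    refine Finset.sum_congr rfl fun i _ => ?_
    rw [TensorProduct.map_tmul, Phi_apply_repr act B (rf.left i) (s i), LinearMap.id_coe, id_eq,
      sum_tmul]
    refine Finset.sum_congr rfl fun l _ => ?_
    simp
  rw [expand, hT1, hT2]

end coleib

section hook
variable {R H K : Type*} [CommRing R] [Ring H] [Ring K]
    [HopfAlgebra R H] [HopfAlgebra R K] (act : H →ₗ[R] K →ₗ[R] H)

lemma counit_Phi
    (hone_act : ∀ k : K, act 1 k = Coalgebra.counit (R := R) k • (1 : H))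
    (hact_mul : ∀ (h₁ h₂ : H) (k : K),
      act (h₁ * h₂) k
        = (LinearMap.mul' R H) ((TensorProduct.map (act h₁) (act h₂)) (Coalgebra.comul k)))
    (hact_comul : ∀ (h : H) (k : K),
      Coalgebra.comul (act h k)
        = (TensorProduct.map (TensorProduct.lift act) (TensorProduct.lift act))
            ((TensorProduct.tensorTensorTensorComm R H H K K)
              (Coalgebra.comul h ⊗ₜ[R] Coalgebra.comul k)))
    (hact_antipode : ∀ (h : H) (k : K),
      HopfAlgebra.antipode (R := R) (act h k) = act (HopfAlgebra.antipode (R := R) h) k)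
    {B : H →ₗ[R] K} (hB : IsEpsCocycle B) (f : H) :
    Coalgebra.counit (R := R) (Phi act B f) = 0 := by
  classical
  set rf := Coalgebra.Repr.arbitrary R f
  rw [Phi_apply_repr act B f rf, map_sum]
  refine Finset.sum_eq_zero fun i _ => ?_
  rw [counit_act act hone_act hact_mul hact_comul hact_antipode, counit_cocycle hB, mul_zero]

lemma hook_pointwise
    (hcoH : ∀ x : H, (TensorProduct.comm R H H) (Coalgebra.comul x) = Coalgebra.comul x)
    (hact_one : ∀ h : H, act h 1 = h)
    (hact_comp : ∀ (h : H) (k k' : K), act (act h k) k' = act h (k * k'))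
    (hact_comul : ∀ (h : H) (k : K),
      Coalgebra.comul (act h k)
        = (TensorProduct.map (TensorProduct.lift act) (TensorProduct.lift act))
            ((TensorProduct.tensorTensorTensorComm R H H K K)
              (Coalgebra.comul h ⊗ₜ[R] Coalgebra.comul k)))
    (B : H →ₗ[R] K) {C : H →ₗ[R] K} (hC : IsEpsCocycle C) (f : H) :
    Phi act B (Phi act C f)
      = Phi act (B ∘ₗ Phi act C) f + Phi act (convMul C B) f := by
  classical
  set rf := Coalgebra.Repr.arbitrary R f with hrfdef
  set s : ∀ i : H × H, Coalgebra.Repr R (rf.left i) (H × H) :=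
    fun i => Coalgebra.Repr.arbitrary R (rf.left i) with hsdef
  set r2 : ∀ i : H × H, Coalgebra.Repr R (rf.right i) (H × H) :=
    fun i => Coalgebra.Repr.arbitrary R (rf.right i) with hr2def
  have e0 : Phi act B (Phi act C f)
      = (TensorProduct.lift act) ((TensorProduct.map LinearMap.id B)
          ((TensorProduct.map LinearMap.id (Phi act C)) (Coalgebra.comul f)))
        + (TensorProduct.lift act) ((TensorProduct.map LinearMap.id B)
          ((TensorProduct.map (Phi act C) LinearMap.id) (Coalgebra.comul f))) := by
    conv_lhs => rw [Phi]
    rw [LinearMap.comp_apply, LinearMap.comp_apply,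
      coLeibniz act hcoH hact_one hact_comul hC f, map_add, map_add]
  have e1 : (TensorProduct.lift act) ((TensorProduct.map LinearMap.id B)
        ((TensorProduct.map LinearMap.id (Phi act C)) (Coalgebra.comul f)))
      = Phi act (B ∘ₗ Phi act C) f := by
    rw [Phi_apply_repr act (B ∘ₗ Phi act C) f rf, ← rf.eq]
    simp [map_sum]
  have e2 : (TensorProduct.lift act) ((TensorProduct.map LinearMap.id B)
        ((TensorProduct.map (Phi act C) LinearMap.id) (Coalgebra.comul f)))
      = Phi act (convMul C B) f := by
    have coassoc := Coalgebra.sum_tmul_tmul_eq rf s r2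
    have happ := congrArg (TensorProduct.lift act ∘ₗ
      LinearMap.lTensor H ((LinearMap.mul' R K) ∘ₗ (TensorProduct.map C B))) coassoc
    simp only [map_sum, LinearMap.coe_comp, Function.comp_apply, LinearMap.lTensor_tmul,
      TensorProduct.map_tmul, LinearMap.mul'_apply, lift.tmul] at happ
    -- LHS of happ : ∑ i ∑ l, act (aᵢₗ) (C bᵢₗ * B rᵢ)
    -- RHS of happ : ∑ i ∑ j, act (lᵢ) (C uᵢⱼ * B vᵢⱼ)
    calc (TensorProduct.lift act) ((TensorProduct.map LinearMap.id B)
          ((TensorProduct.map (Phi act C) LinearMap.id) (Coalgebra.comul f)))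
        = ∑ i ∈ rf.index, act (Phi act C (rf.left i)) (B (rf.right i)) := by
          rw [← rf.eq]
          simp [map_sum]
      _ = ∑ i ∈ rf.index, ∑ l ∈ (s i).index,
            act ((s i).left l) (C ((s i).right l) * B (rf.right i)) := by
          refine Finset.sum_congr rfl fun i _ => ?_
          rw [Phi_apply_repr act C (rf.left i) (s i), map_sum, LinearMap.coe_sum,
            Finset.sum_apply]
          refine Finset.sum_congr rfl fun l _ => ?_
          rw [hact_comp]
      _ = ∑ i ∈ rf.index, ∑ j ∈ (r2 i).index,
            act (rf.left i) (C ((r2 i).left j) * B ((r2 i).right j)) := happ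
      _ = Phi act (convMul C B) f := by
          rw [Phi_apply_repr act (convMul C B) f rf]
          refine Finset.sum_congr rfl fun i _ => ?_
          rw [convMul, LinearMap.comp_apply, LinearMap.comp_apply, ← (r2 i).eq]
          simp [map_sum]
  rw [e0, e1, e2]

lemma hook
    (hcoH : ∀ x : H, (TensorProduct.comm R H H) (Coalgebra.comul x) = Coalgebra.comul x)
    (hact_one : ∀ h : H, act h 1 = h)
    (hact_comp : ∀ (h : H) (k k' : K), act (act h k) k' = act h (k * k'))
    (hact_comul : ∀ (h : H) (k : K),
      Coalgebra.comul (act h k)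
        = (TensorProduct.map (TensorProduct.lift act) (TensorProduct.lift act))
            ((TensorProduct.tensorTensorTensorComm R H H K K)
              (Coalgebra.comul h ⊗ₜ[R] Coalgebra.comul k)))
    (B : H →ₗ[R] K) {C : H →ₗ[R] K} (hC : IsEpsCocycle C) :
    Phi act B ∘ₗ Phi act C = Phi act (B ∘ₗ Phi act C) + Phi act (convMul C B) := by
  ext f
  exact hook_pointwise act hcoH hact_one hact_comp hact_comul B hC f

end hook

section assemble
variable {R H K : Type*} [CommRing R] [Ring H] [Ring K]
    [HopfAlgebra R H] [HopfAlgebra R K] (act : H →ₗ[R] K →ₗ[R] H)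

lemma convMul_neg_left (X Y : H →ₗ[R] K) : convMul (-X) Y = -(convMul X Y) := by
  apply LinearMap.ext; intro f
  classical
  set rf := Coalgebra.Repr.arbitrary R f
  simp only [convMul, LinearMap.comp_apply, LinearMap.neg_apply, ← rf.eq]
  simp [map_sum]

lemma convMul_neg_right (X Y : H →ₗ[R] K) : convMul X (-Y) = -(convMul X Y) := by
  apply LinearMap.ext; intro f
  classical
  set rf := Coalgebra.Repr.arbitrary R f
  simp only [convMul, LinearMap.comp_apply, LinearMap.neg_apply, ← rf.eq]
  simp [map_sum]

lemma convMul_add_left (X X' Y : H →ₗ[R] K) :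
    convMul (X + X') Y = convMul X Y + convMul X' Y := by
  apply LinearMap.ext; intro f
  classical
  set rf := Coalgebra.Repr.arbitrary R f
  simp only [convMul, LinearMap.comp_apply, LinearMap.add_apply, ← rf.eq]
  simp [map_sum, add_mul, Finset.sum_add_distrib]

lemma convMul_add_right (X Y Y' : H →ₗ[R] K) :
    convMul X (Y + Y') = convMul X Y + convMul X Y' := by
  apply LinearMap.ext; intro f
  classical
  set rf := Coalgebra.Repr.arbitrary R f
  simp only [convMul, LinearMap.comp_apply, LinearMap.add_apply, ← rf.eq]
  simp [map_sum, mul_add, Finset.sum_add_distrib]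

lemma convMul_sub_left (X X' Y : H →ₗ[R] K) :
    convMul (X - X') Y = convMul X Y - convMul X' Y := by
  rw [sub_eq_add_neg, convMul_add_left, convMul_neg_left, sub_eq_add_neg]

lemma convMul_sub_right (X Y Y' : H →ₗ[R] K) :
    convMul X (Y - Y') = convMul X Y - convMul X Y' := by
  rw [sub_eq_add_neg, convMul_add_right, convMul_neg_right, sub_eq_add_neg]

lemma conv_deriv
    (hcoH : ∀ x : H, (TensorProduct.comm R H H) (Coalgebra.comul x) = Coalgebra.comul x)
    (hact_one : ∀ h : H, act h 1 = h)
    (hact_comul : ∀ (h : H) (k : K),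
      Coalgebra.comul (act h k)
        = (TensorProduct.map (TensorProduct.lift act) (TensorProduct.lift act))
            ((TensorProduct.tensorTensorTensorComm R H H K K)
              (Coalgebra.comul h ⊗ₜ[R] Coalgebra.comul k)))
    (X Y : H →ₗ[R] K) {C : H →ₗ[R] K} (hC : IsEpsCocycle C) :
    (convMul X Y) ∘ₗ Phi act C
      = convMul X (Y ∘ₗ Phi act C) + convMul (X ∘ₗ Phi act C) Y := by
  apply LinearMap.ext; intro f
  classical
  set rf := Coalgebra.Repr.arbitrary R f
  simp only [convMul, LinearMap.comp_apply, LinearMap.add_apply]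
  rw [coLeibniz act hcoH hact_one hact_comul hC f, map_add, map_add]
  conv_rhs => rw [← rf.eq]
  conv_lhs => rw [← rf.eq]
  simp [map_sum, Finset.sum_add_distrib]

lemma stability
    (hcoH : ∀ x : H, (TensorProduct.comm R H H) (Coalgebra.comul x) = Coalgebra.comul x)
    (hact_one : ∀ h : H, act h 1 = h)
    (hone_act : ∀ k : K, act 1 k = Coalgebra.counit (R := R) k • (1 : H))
    (hact_mul : ∀ (h₁ h₂ : H) (k : K),
      act (h₁ * h₂) k
        = (LinearMap.mul' R H) ((TensorProduct.map (act h₁) (act h₂)) (Coalgebra.comul k)))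
    (hact_comul : ∀ (h : H) (k : K),
      Coalgebra.comul (act h k)
        = (TensorProduct.map (TensorProduct.lift act) (TensorProduct.lift act))
            ((TensorProduct.tensorTensorTensorComm R H H K K)
              (Coalgebra.comul h ⊗ₜ[R] Coalgebra.comul k)))
    (hact_antipode : ∀ (h : H) (k : K),
      HopfAlgebra.antipode (R := R) (act h k) = act (HopfAlgebra.antipode (R := R) h) k)
    {A B : H →ₗ[R] K} (hA : IsEpsCocycle A) (hB : IsEpsCocycle B) :
    IsEpsCocycle (triMul act A B) := by
  classical
  rw [IsEpsCocycle]
  apply LinearMap.ext; intro f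
  set rf := Coalgebra.Repr.arbitrary R f
  have e : ∀ x : H, triMul act A B x = -(A (Phi act B x)) := fun _ => rfl
  simp only [LinearMap.comp_apply, LinearMap.add_apply, e, map_neg]
  rw [cocycle_comul_apply hA, coLeibniz act hcoH hact_one hact_comul hB f, map_add, map_add]
  conv_lhs => rw [← rf.eq]
  conv_rhs => rw [← rf.eq]
  simp only [map_sum, TensorProduct.map_tmul, LinearMap.comp_apply, LinearMap.id_coe, id_eq,
    Algebra.linearMap_apply, e,
    counit_Phi act hone_act hact_mul hact_comul hact_antipode hB, map_zero, zero_tmul,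
    tmul_zero, Finset.sum_const_zero, add_zero, zero_add, tmul_neg, neg_tmul,
    Finset.sum_neg_distrib]
  abel

end assemble

/-- For a right Hopf module `(H, ◁◁, K)` of cocommutative Hopf algebras,
the space `δ` of `ε`-co-cocycles is stable under `◁◁*`, and `(δ, ◁◁*, [−,−]_*)` is a
postLie algebra for the convolution commutator bracket. -/
theorem eps_cocycles_postLie
    {R H K : Type*} [CommRing R] [Ring H] [Ring K]
    [HopfAlgebra R H] [HopfAlgebra R K]
    (hcoH : ∀ x : H, (TensorProduct.comm R H H) (Coalgebra.comul x) = Coalgebra.comul x)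
    (hcoK : ∀ x : K, (TensorProduct.comm R K K) (Coalgebra.comul x) = Coalgebra.comul x)
    (act : H →ₗ[R] K →ₗ[R] H)
    (hact_one : ∀ h : H, act h 1 = h)
    (hone_act : ∀ k : K, act 1 k = Coalgebra.counit (R := R) k • (1 : H))
    (hact_mul : ∀ (h₁ h₂ : H) (k : K),
      act (h₁ * h₂) k
        = (LinearMap.mul' R H) ((TensorProduct.map (act h₁) (act h₂)) (Coalgebra.comul k)))
    (hact_comp : ∀ (h : H) (k k' : K), act (act h k) k' = act h (k * k'))
    (hact_comul : ∀ (h : H) (k : K),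
      Coalgebra.comul (act h k)
        = (TensorProduct.map (TensorProduct.lift act) (TensorProduct.lift act))
            ((TensorProduct.tensorTensorTensorComm R H H K K)
              (Coalgebra.comul h ⊗ₜ[R] Coalgebra.comul k)))
    (hact_antipode : ∀ (h : H) (k : K),
      HopfAlgebra.antipode (R := R) (act h k) = act (HopfAlgebra.antipode (R := R) h) k) :
    -- `δ` is stable under `◁◁*`
    (∀ A B : H →ₗ[R] K, IsEpsCocycle A → IsEpsCocycle B → IsEpsCocycle (triMul act A B)) ∧
    -- first postLie axiom: `[α,β]_* ◁◁* γ = [α ◁◁* γ, β]_* + [α, β ◁◁* γ]_*`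
    (∀ A B C : H →ₗ[R] K, IsEpsCocycle A → IsEpsCocycle B → IsEpsCocycle C →
      triMul act (convMul A B - convMul B A) C
        = (convMul (triMul act A C) B - convMul B (triMul act A C))
          + (convMul A (triMul act B C) - convMul (triMul act B C) A)) ∧
    -- second postLie axiom:
    -- `(α◁◁*β)◁◁*γ − α◁◁*(β◁◁*γ) − (α◁◁*γ)◁◁*β + α◁◁*(γ◁◁*β) = α ◁◁* [β,γ]_*`
    (∀ A B C : H →ₗ[R] K, IsEpsCocycle A → IsEpsCocycle B → IsEpsCocycle C →
      triMul act (triMul act A B) C - triMul act A (triMul act B C)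
        - triMul act (triMul act A C) B + triMul act A (triMul act C B)
        = triMul act A (convMul B C - convMul C B)) := by
  refine ⟨?_, ?_, ?_⟩
  · intro A B hA hB
    exact stability act hcoH hact_one hone_act hact_mul hact_comul hact_antipode hA hB
  · intro A B C hA hB hC
    have h1 := conv_deriv act hcoH hact_one hact_comul A B hC
    have h2 := conv_deriv act hcoH hact_one hact_comul B A hC
    simp only [triMul_eq act]
    rw [LinearMap.sub_comp, h1, h2, convMul_neg_left, convMul_neg_right, convMul_neg_left,
      convMul_neg_right]
    abel
  · intro A B C hA hB hC
    have hk1 := hook act hcoH hact_one hact_comp hact_comul B hC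
    have hk2 := hook act hcoH hact_one hact_comp hact_comul C hB
    simp only [triMul_eq act, Phi_neg, Phi_sub, LinearMap.comp_neg, LinearMap.neg_comp,
      neg_neg, LinearMap.comp_sub]
    rw [LinearMap.comp_assoc, LinearMap.comp_assoc, hk1, hk2, LinearMap.comp_add,
      LinearMap.comp_add]
    abel
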